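/- Let ρ be a probability measure on ℝ with density f with respect to Lebesgue measure, and let ν_ρ be the law of (Z, Z²) for Z ~ ρ. Then the convolution ν_ρ * ν_ρ has density f₂(x,y) = (2y − x²)^{−1/2} f((x + √(2y − x²))/2) f((x − √(2y − x²))/2) · 1_{x² < 2y} with respect to Lebesgue measure on ℝ². -/

import Mathlib

open MeasureTheory
open scoped MeasureTheory ENNReal

noncomputable def Phi : ℝ × ℝ → ℝ × ℝ := fun p => (p.1 + p.2, p.1 ^ 2 + p.2 ^ 2)

noncomputable def Lm (p : ℝ × ℝ) : ℝ × ℝ →L[ℝ] ℝ × ℝ :=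
  ((ContinuousLinearMap.fst ℝ ℝ ℝ) + (ContinuousLinearMap.snd ℝ ℝ ℝ)).prod
    ((2 * p.1) • ContinuousLinearMap.fst ℝ ℝ ℝ + (2 * p.2) • ContinuousLinearMap.snd ℝ ℝ ℝ)

lemma hasFDeriv_Phi (p : ℝ × ℝ) : HasFDerivAt Phi (Lm p) p := by
  have h1 : HasFDerivAt (fun q : ℝ × ℝ => q.1 + q.2)
      ((ContinuousLinearMap.fst ℝ ℝ ℝ) + (ContinuousLinearMap.snd ℝ ℝ ℝ)) p :=
    (hasFDerivAt_fst.add hasFDerivAt_snd)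
  have a1 : HasFDerivAt (fun q : ℝ × ℝ => q.1 * q.1)
      (p.1 • ContinuousLinearMap.fst ℝ ℝ ℝ + p.1 • ContinuousLinearMap.fst ℝ ℝ ℝ) p :=
    (hasFDerivAt_fst (𝕜 := ℝ) (p := p) (E := ℝ) (F := ℝ)).mul
      (hasFDerivAt_fst (𝕜 := ℝ) (p := p) (E := ℝ) (F := ℝ))
  have a2 : HasFDerivAt (fun q : ℝ × ℝ => q.2 * q.2)
      (p.2 • ContinuousLinearMap.snd ℝ ℝ ℝ + p.2 • ContinuousLinearMap.snd ℝ ℝ ℝ) p :=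
    (hasFDerivAt_snd (𝕜 := ℝ) (p := p) (E := ℝ) (F := ℝ)).mul
      (hasFDerivAt_snd (𝕜 := ℝ) (p := p) (E := ℝ) (F := ℝ))
  have h2 : HasFDerivAt (fun q : ℝ × ℝ => q.1 ^ 2 + q.2 ^ 2)
      ((2 * p.1) • ContinuousLinearMap.fst ℝ ℝ ℝ + (2 * p.2) • ContinuousLinearMap.snd ℝ ℝ ℝ) p := by
    have h := a1.add a2
    have heq : (fun q : ℝ × ℝ => q.1 * q.1 + q.2 * q.2) = fun q : ℝ × ℝ => q.1 ^ 2 + q.2 ^ 2 := by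
      funext q; ring
    have hL : p.1 • ContinuousLinearMap.fst ℝ ℝ ℝ + p.1 • ContinuousLinearMap.fst ℝ ℝ ℝ +
        (p.2 • ContinuousLinearMap.snd ℝ ℝ ℝ + p.2 • ContinuousLinearMap.snd ℝ ℝ ℝ) =
        (2 * p.1) • ContinuousLinearMap.fst ℝ ℝ ℝ + (2 * p.2) • ContinuousLinearMap.snd ℝ ℝ ℝ := by
      ext <;> simp <;> ring
    rw [← heq, ← hL]; exact h
  exact h1.prodMk h2

lemma det_Lm (p : ℝ × ℝ) : (Lm p).det = 2 * p.2 - 2 * p.1 := by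
  have h : (Lm p).det = LinearMap.det ((Lm p) : ℝ × ℝ →ₗ[ℝ] ℝ × ℝ) := rfl
  rw [h, ← LinearMap.det_toMatrix (Module.Basis.finTwoProd ℝ), Matrix.det_fin_two]
  simp [LinearMap.toMatrix_apply, Lm, Module.Basis.finTwoProd]

lemma phi_factor {z t z' t' : ℝ} (h1 : z + t = z' + t') (h2 : z ^ 2 + t ^ 2 = z' ^ 2 + t' ^ 2) :
    (z' = z ∧ t' = t) ∨ (z' = t ∧ t' = z) := by
  have h1' : (z + t) ^ 2 = (z' + t') ^ 2 := by rw [h1]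
  have hp : z * t = z' * t' := by linear_combination h1' / 2 - h2 / 2
  have hfac : (z' - z) * (z' - t) = 0 := by linear_combination hp - z' * h1
  rcases mul_eq_zero.1 hfac with h | h
  · left; constructor <;> linarith
  · right; constructor <;> linarith

lemma injOn_lt : Set.InjOn Phi {p : ℝ × ℝ | p.1 < p.2} := by
  rintro ⟨z, t⟩ hz ⟨z', t'⟩ hz' h
  simp only [Phi, Prod.mk.injEq] at h
  obtain ⟨h1, h2⟩ := h
  rcases phi_factor h1 h2 with ⟨a, b⟩ | ⟨a, b⟩
  · simp [a, b]
  · exfalso; simp only [Set.mem_setOf_eq] at hz hz'; nlinarith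

lemma injOn_gt : Set.InjOn Phi {p : ℝ × ℝ | p.2 < p.1} := by
  rintro ⟨z, t⟩ hz ⟨z', t'⟩ hz' h
  simp only [Phi, Prod.mk.injEq] at h
  obtain ⟨h1, h2⟩ := h
  rcases phi_factor h1 h2 with ⟨a, b⟩ | ⟨a, b⟩
  · simp [a, b]
  · exfalso; simp only [Set.mem_setOf_eq] at hz hz'; nlinarith

lemma image_lt : Phi '' {p : ℝ × ℝ | p.1 < p.2} = {q : ℝ × ℝ | q.1 ^ 2 < 2 * q.2} := by
  ext ⟨u, v⟩
  constructor
  · rintro ⟨⟨z, t⟩, hzt, h⟩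
    simp only [Phi, Prod.mk.injEq] at h
    obtain ⟨rfl, rfl⟩ := h
    simp only [Set.mem_setOf_eq] at hzt ⊢
    nlinarith
  · rintro h
    simp only [Set.mem_setOf_eq] at h
    refine ⟨((u - Real.sqrt (2 * v - u ^ 2)) / 2, (u + Real.sqrt (2 * v - u ^ 2)) / 2), ?_, ?_⟩
    · have : 0 < Real.sqrt (2 * v - u ^ 2) := Real.sqrt_pos.2 (by linarith)
      simp only [Set.mem_setOf_eq]; linarith
    · have hs : Real.sqrt (2 * v - u ^ 2) ^ 2 = 2 * v - u ^ 2 :=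
        Real.sq_sqrt (by linarith)
      simp only [Phi, Prod.mk.injEq]
      constructor <;> nlinarith [hs]

lemma image_gt : Phi '' {p : ℝ × ℝ | p.2 < p.1} = {q : ℝ × ℝ | q.1 ^ 2 < 2 * q.2} := by
  ext ⟨u, v⟩
  constructor
  · rintro ⟨⟨z, t⟩, hzt, h⟩
    simp only [Phi, Prod.mk.injEq] at h
    obtain ⟨rfl, rfl⟩ := h
    simp only [Set.mem_setOf_eq] at hzt ⊢
    nlinarith
  · rintro h
    simp only [Set.mem_setOf_eq] at h
    refine ⟨((u + Real.sqrt (2 * v - u ^ 2)) / 2, (u - Real.sqrt (2 * v - u ^ 2)) / 2), ?_, ?_⟩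
    · have : 0 < Real.sqrt (2 * v - u ^ 2) := Real.sqrt_pos.2 (by linarith)
      simp only [Set.mem_setOf_eq]; linarith
    · have hs : Real.sqrt (2 * v - u ^ 2) ^ 2 = 2 * v - u ^ 2 :=
        Real.sq_sqrt (by linarith)
      simp only [Phi, Prod.mk.injEq]
      constructor <;> nlinarith [hs]

lemma branch_lt (f : ℝ → ℝ) (hf0 : ∀ z, 0 ≤ f z) {z t : ℝ} (h : z < t) :
    ENNReal.ofReal |2 * t - 2 * z| *
      ENNReal.ofReal (((2 * (z ^ 2 + t ^ 2) - (z + t) ^ 2) ^ (-(1 / 2 : ℝ)) *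
        f (((z + t) + Real.sqrt (2 * (z ^ 2 + t ^ 2) - (z + t) ^ 2)) / 2) *
        f (((z + t) - Real.sqrt (2 * (z ^ 2 + t ^ 2) - (z + t) ^ 2)) / 2)) / 2) =
    ENNReal.ofReal (f z) * ENNReal.ofReal (f t) := by
  have hd : 2 * (z ^ 2 + t ^ 2) - (z + t) ^ 2 = (t - z) ^ 2 := by ring
  have hpos : (0 : ℝ) < t - z := by linarith
  have hsq : Real.sqrt ((t - z) ^ 2) = t - z := Real.sqrt_sq hpos.le
  have hrp : ((t - z) ^ 2 : ℝ) ^ (-(1 / 2 : ℝ)) = (t - z)⁻¹ := by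
    rw [Real.rpow_neg (sq_nonneg _), ← Real.sqrt_eq_rpow, hsq]
  have e1 : ((z + t) + (t - z)) / 2 = t := by ring
  have e2 : ((z + t) - (t - z)) / 2 = z := by ring
  rw [hd, hsq, hrp, e1, e2, abs_of_pos (by linarith),
    ← ENNReal.ofReal_mul (by linarith), ← ENNReal.ofReal_mul (hf0 z)]
  congr 1
  field_simp

lemma branch_gt (f : ℝ → ℝ) (hf0 : ∀ z, 0 ≤ f z) {z t : ℝ} (h : t < z) :
    ENNReal.ofReal |2 * t - 2 * z| *
      ENNReal.ofReal (((2 * (z ^ 2 + t ^ 2) - (z + t) ^ 2) ^ (-(1 / 2 : ℝ)) *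
        f (((z + t) + Real.sqrt (2 * (z ^ 2 + t ^ 2) - (z + t) ^ 2)) / 2) *
        f (((z + t) - Real.sqrt (2 * (z ^ 2 + t ^ 2) - (z + t) ^ 2)) / 2)) / 2) =
    ENNReal.ofReal (f z) * ENNReal.ofReal (f t) := by
  have hd : 2 * (z ^ 2 + t ^ 2) - (z + t) ^ 2 = (z - t) ^ 2 := by ring
  have hpos : (0 : ℝ) < z - t := by linarith
  have hsq : Real.sqrt ((z - t) ^ 2) = z - t := Real.sqrt_sq hpos.le
  have hrp : ((z - t) ^ 2 : ℝ) ^ (-(1 / 2 : ℝ)) = (z - t)⁻¹ := by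
    rw [Real.rpow_neg (sq_nonneg _), ← Real.sqrt_eq_rpow, hsq]
  have e1 : ((z + t) + (z - t)) / 2 = z := by ring
  have e2 : ((z + t) - (z - t)) / 2 = t := by ring
  rw [hd, hsq, hrp, e1, e2, abs_of_neg (by linarith), show -(2 * t - 2 * z) = 2 * (z - t) by ring,
    ← ENNReal.ofReal_mul (by linarith), ← ENNReal.ofReal_mul (hf0 z)]
  congr 1
  field_simp

theorem density_of_conv_of_pushforward (ρ : Measure ℝ) [IsProbabilityMeasure ρ]
    (f : ℝ → ℝ) (hf_meas : Measurable f) (hf_nonneg : ∀ z, 0 ≤ f z)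
    (hρ : ρ = MeasureTheory.volume.withDensity (fun z => ENNReal.ofReal (f z))) :
    Measure.conv (ρ.map (fun z => ((z, z ^ 2) : ℝ × ℝ))) (ρ.map (fun z => ((z, z ^ 2) : ℝ × ℝ))) =
      MeasureTheory.volume.withDensity (fun p : ℝ × ℝ =>
        if p.1 ^ 2 < 2 * p.2 then
          ENNReal.ofReal ((2 * p.2 - p.1 ^ 2) ^ (-(1 / 2 : ℝ)) *
            f ((p.1 + Real.sqrt (2 * p.2 - p.1 ^ 2)) / 2) *
            f ((p.1 - Real.sqrt (2 * p.2 - p.1 ^ 2)) / 2))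
        else 0) := by
  classical
  set g1 : ℝ → ℝ × ℝ := fun z => (z, z ^ 2) with hg1def
  have hg1m : Measurable g1 := measurable_id.prodMk (measurable_id.pow_const 2)
  have hPhim : Measurable Phi := by
    unfold Phi; fun_prop
  set F : ℝ × ℝ → ℝ≥0∞ := fun p => ENNReal.ofReal (f p.1) * ENNReal.ofReal (f p.2) with hFdef
  have hFm : Measurable F :=
    ((hf_meas.comp measurable_fst).ennreal_ofReal).mul
      ((hf_meas.comp measurable_snd).ennreal_ofReal)
  set D : ℝ × ℝ → ℝ := fun q => (2 * q.2 - q.1 ^ 2) ^ (-(1 / 2 : ℝ)) *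
      f ((q.1 + Real.sqrt (2 * q.2 - q.1 ^ 2)) / 2) *
      f ((q.1 - Real.sqrt (2 * q.2 - q.1 ^ 2)) / 2) with hDdef
  have hDm : Measurable D := by
    apply Measurable.mul
    apply Measurable.mul
    · fun_prop
    · exact hf_meas.comp (by fun_prop)
    · exact hf_meas.comp (by fun_prop)
  set A : Set (ℝ × ℝ) := {p | p.1 < p.2} with hAdef
  set A' : Set (ℝ × ℝ) := {p | p.2 < p.1} with hA'def
  set Eset : Set (ℝ × ℝ) := {q : ℝ × ℝ | q.1 ^ 2 < 2 * q.2} with hEdef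
  have hAm : MeasurableSet A := measurableSet_lt measurable_fst measurable_snd
  have hA'm : MeasurableSet A' := measurableSet_lt measurable_snd measurable_fst
  have hEm : MeasurableSet Eset :=
    measurableSet_lt (measurable_fst.pow_const 2) (measurable_const.mul measurable_snd)
  -- Step 1: rewrite the convolution as a pushforward of ρ.prod ρ under Phi
  have hprob : IsProbabilityMeasure (ρ.map g1) := Measure.isProbabilityMeasure_map hg1m.aemeasurable
  have hconv : Measure.conv (ρ.map g1) (ρ.map g1) = Measure.map Phi (ρ.prod ρ) := by
    have h0 : Measure.conv (ρ.map g1) (ρ.map g1) =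
        Measure.map (fun p : (ℝ × ℝ) × (ℝ × ℝ) => p.1 + p.2) ((ρ.map g1).prod (ρ.map g1)) := rfl
    rw [h0, Measure.map_prod_map _ _ hg1m hg1m,
      Measure.map_map (by fun_prop) (hg1m.prodMap hg1m)]
    have hco : ((fun p : (ℝ × ℝ) × (ℝ × ℝ) => p.1 + p.2) ∘ Prod.map g1 g1) = Phi := by
      funext p
      simp [g1, Phi, Prod.map, Prod.mk_add_mk]
    rw [hco]
  -- Step 2: ρ.prod ρ is volume with density F
  have hprodρ : ρ.prod ρ = (volume : Measure (ℝ × ℝ)).withDensity F := by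
    refine Measure.prod_eq fun s t hs ht => ?_
    rw [withDensity_apply _ (hs.prod ht)]
    have hres : (volume : Measure (ℝ × ℝ)).restrict (s ×ˢ t) =
        ((volume : Measure ℝ).restrict s).prod ((volume : Measure ℝ).restrict t) := by
      rw [Measure.volume_eq_prod, Measure.prod_restrict]
    rw [hres, lintegral_prod_mul (hf_meas.ennreal_ofReal.aemeasurable)
      (hf_meas.ennreal_ofReal.aemeasurable)]
    rw [hρ, withDensity_apply _ hs, withDensity_apply _ ht]
  rw [hconv, hprodρ]
  -- Step 3: compare the two measures on every measurable set
  ext s hs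
  rw [Measure.map_apply hPhim hs, withDensity_apply _ (hPhim hs), withDensity_apply _ hs]
  set T : Set (ℝ × ℝ) := Phi ⁻¹' s with hTdef
  have hTm : MeasurableSet T := hPhim hs
  -- the diagonal is null
  have hdiag : (volume : Measure (ℝ × ℝ)) {p : ℝ × ℝ | p.1 = p.2} = 0 := by
    rw [Measure.volume_eq_prod, Measure.measure_prod_null
      (measurableSet_eq_fun measurable_fst measurable_snd)]
    refine Filter.Eventually.of_forall fun x => ?_
    have hx : (Prod.mk x ⁻¹' {p : ℝ × ℝ | p.1 = p.2}) = {x} := by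
      ext y; simp [eq_comm]
    simp [hx]
  -- split the integral over the two open half-planes
  have hcompl : (A ∪ A')ᶜ = {p : ℝ × ℝ | p.1 = p.2} := by
    ext p
    simp only [Set.mem_compl_iff, Set.mem_union, hAdef, hA'def, Set.mem_setOf_eq, not_or, not_lt]
    constructor
    · rintro ⟨h1, h2⟩; exact le_antisymm h2 h1
    · rintro h; exact ⟨le_of_eq h.symm, le_of_eq h⟩
  have hsplit : ∫⁻ p in T, F p ∂(volume : Measure (ℝ × ℝ)) =
      (∫⁻ p in T ∩ A, F p ∂volume) + ∫⁻ p in T ∩ A', F p ∂volume := by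
    have h1 : T =ᵐ[(volume : Measure (ℝ × ℝ))] (T ∩ (A ∪ A') : Set (ℝ × ℝ)) := by
      refine (MeasureTheory.ae_eq_set).2 ⟨?_, ?_⟩
      · refine measure_mono_null (fun p hp => ?_) hdiag
        rw [← hcompl]
        exact fun hmem => hp.2 ⟨hp.1, hmem⟩
      · exact measure_mono_null (fun p hp => absurd hp.1.1 hp.2) hdiag
    rw [setLIntegral_congr h1, Set.inter_union_distrib_left,
      lintegral_union (hTm.inter hA'm) ?_]
    refine Set.disjoint_left.2 fun p hp hp' => ?_
    have h1 : p.1 < p.2 := hp.2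
    have h2 : p.2 < p.1 := hp'.2
    exact absurd h1 (not_lt.2 h2.le)
  -- the common integrand on the image side
  set gg : ℝ × ℝ → ℝ≥0∞ := Set.indicator s (fun q => ENNReal.ofReal (D q / 2)) with hggdef
  have hggm : Measurable gg :=
    Measurable.indicator ((hDm.div_const 2).ennreal_ofReal) hs
  -- change of variables on each half-plane
  have hcvA : ∫⁻ p in T ∩ A, F p ∂(volume : Measure (ℝ × ℝ)) = ∫⁻ q in Eset, gg q ∂volume := by
    have hcv := lintegral_image_eq_lintegral_abs_det_fderiv_mul (volume : Measure (ℝ × ℝ)) hAm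
      (fun x _ => (hasFDeriv_Phi x).hasFDerivWithinAt) injOn_lt gg
    rw [image_lt] at hcv
    rw [← hEdef] at hcv
    rw [hcv]
    have heq : ∫⁻ p in T ∩ A, F p ∂(volume : Measure (ℝ × ℝ)) =
        ∫⁻ p in A, Set.indicator T F p ∂volume := by
      rw [lintegral_indicator hTm, Measure.restrict_restrict hTm]
    rw [heq]
    refine setLIntegral_congr_fun_ae hAm (Filter.Eventually.of_forall fun x hx => ?_)
    have hxlt : x.1 < x.2 := hx
    by_cases hxT : x ∈ T
    · have hPs : Phi x ∈ s := hxT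
      rw [Set.indicator_of_mem hxT, hggdef, Set.indicator_of_mem hPs, det_Lm]
      have := branch_lt f hf_nonneg hxlt
      simp only [hDdef, Phi] at *
      exact (this).symm
    · have hPs : Phi x ∉ s := hxT
      rw [Set.indicator_of_notMem hxT, hggdef, Set.indicator_of_notMem hPs, mul_zero]
  have hcvA' : ∫⁻ p in T ∩ A', F p ∂(volume : Measure (ℝ × ℝ)) = ∫⁻ q in Eset, gg q ∂volume := by
    have hcv := lintegral_image_eq_lintegral_abs_det_fderiv_mul (volume : Measure (ℝ × ℝ)) hA'm
      (fun x _ => (hasFDeriv_Phi x).hasFDerivWithinAt) injOn_gt gg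
    rw [image_gt] at hcv
    rw [← hEdef] at hcv
    rw [hcv]
    have heq : ∫⁻ p in T ∩ A', F p ∂(volume : Measure (ℝ × ℝ)) =
        ∫⁻ p in A', Set.indicator T F p ∂volume := by
      rw [lintegral_indicator hTm, Measure.restrict_restrict hTm]
    rw [heq]
    refine setLIntegral_congr_fun_ae hA'm (Filter.Eventually.of_forall fun x hx => ?_)
    have hxgt : x.2 < x.1 := hx
    by_cases hxT : x ∈ T
    · have hPs : Phi x ∈ s := hxT
      rw [Set.indicator_of_mem hxT, hggdef, Set.indicator_of_mem hPs, det_Lm]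
      have := branch_gt f hf_nonneg hxgt
      simp only [hDdef, Phi] at *
      exact (this).symm
    · have hPs : Phi x ∉ s := hxT
      rw [Set.indicator_of_notMem hxT, hggdef, Set.indicator_of_notMem hPs, mul_zero]
  -- sum the two halves
  have hsum : (∫⁻ q in Eset, gg q ∂(volume : Measure (ℝ × ℝ))) + ∫⁻ q in Eset, gg q ∂volume =
      ∫⁻ q in Eset, Set.indicator s (fun q => ENNReal.ofReal (D q)) q ∂volume := by
    rw [← lintegral_add_left hggm]
    refine setLIntegral_congr_fun_ae hEm (Filter.Eventually.of_forall fun q hq => ?_)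
    have hqE : q.1 ^ 2 < 2 * q.2 := hq
    have hD0 : 0 ≤ D q := by
      have h1 : (0:ℝ) ≤ (2 * q.2 - q.1 ^ 2) ^ (-(1 / 2 : ℝ)) :=
        Real.rpow_nonneg (by linarith) _
      have := hf_nonneg ((q.1 + Real.sqrt (2 * q.2 - q.1 ^ 2)) / 2)
      have := hf_nonneg ((q.1 - Real.sqrt (2 * q.2 - q.1 ^ 2)) / 2)
      simp only [hDdef]
      positivity
    by_cases hqs : q ∈ s
    · rw [hggdef, Set.indicator_of_mem hqs, Set.indicator_of_mem hqs,
        ← ENNReal.ofReal_add (by linarith) (by linarith)]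
      congr 1
      ring
    · rw [hggdef, Set.indicator_of_notMem hqs, Set.indicator_of_notMem hqs, add_zero]
  -- identify the right-hand side
  have hrhs : ∫⁻ q in s, (fun p : ℝ × ℝ =>
        if p.1 ^ 2 < 2 * p.2 then
          ENNReal.ofReal ((2 * p.2 - p.1 ^ 2) ^ (-(1 / 2 : ℝ)) *
            f ((p.1 + Real.sqrt (2 * p.2 - p.1 ^ 2)) / 2) *
            f ((p.1 - Real.sqrt (2 * p.2 - p.1 ^ 2)) / 2))
        else 0) q ∂(volume : Measure (ℝ × ℝ)) =
      ∫⁻ q in Eset, Set.indicator s (fun q => ENNReal.ofReal (D q)) q ∂volume := by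
    have hident : (fun p : ℝ × ℝ =>
        if p.1 ^ 2 < 2 * p.2 then
          ENNReal.ofReal ((2 * p.2 - p.1 ^ 2) ^ (-(1 / 2 : ℝ)) *
            f ((p.1 + Real.sqrt (2 * p.2 - p.1 ^ 2)) / 2) *
            f ((p.1 - Real.sqrt (2 * p.2 - p.1 ^ 2)) / 2))
        else 0) = Set.indicator Eset (fun q => ENNReal.ofReal (D q)) := by
      funext q
      by_cases hq : q.1 ^ 2 < 2 * q.2
      · rw [if_pos hq, Set.indicator_of_mem (show q ∈ Eset from hq)]
      · rw [if_neg hq, Set.indicator_of_notMem (show q ∉ Eset from hq)]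
    rw [hident, lintegral_indicator hEm, Measure.restrict_restrict hEm,
      lintegral_indicator hs, Measure.restrict_restrict hs, Set.inter_comm]
  rw [hrhs, hsplit, hcvA, hcvA', hsum]
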